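/- For any field k and any t ∈ k, the rational map g_t of P^3 defined by the four degree-13 forms (f_t)_i restricts to a bijective (biregular) automorphism of the affine open set {D ≠ 0} ⊂ P^3, with inverse given by g_{-t}. -/
import Mathlib

/-- The discriminant of the binary cubic `x0*T0^3 + 3*x1*T0^2*T1 + 3*x2*T0*T1^2 + x3*T1^3`. -/
def Dq {R : Type*} [CommRing R] (x0 x1 x2 x3 : R) : R :=
  x0 ^ 2 * x3 ^ 2 - 3 * x1 ^ 2 * x2 ^ 2 - 6 * x0 * x1 * x2 * x3 + 4 * x0 * x2 ^ 3 +
    4 * x3 * x1 ^ 3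

/-- The four degree-13 forms `(f_t)_0, (f_t)_1, (f_t)_2, (f_t)_3` of the Cremona
transformation `g_t`. -/
def fT {R : Type*} [CommRing R] (t x0 x1 x2 x3 : R) : Fin 4 → R :=
  ![x0 * Dq x0 x1 x2 x3 ^ 3,
    x1 * Dq x0 x1 x2 x3 ^ 3 + t * x0 ^ 5 * Dq x0 x1 x2 x3 ^ 2,
    x2 * Dq x0 x1 x2 x3 ^ 3 + 2 * t * x1 * x0 ^ 4 * Dq x0 x1 x2 x3 ^ 2 +
      t ^ 2 * x0 ^ 9 * Dq x0 x1 x2 x3,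
    x3 * Dq x0 x1 x2 x3 ^ 3 + 3 * t * x2 * x0 ^ 4 * Dq x0 x1 x2 x3 ^ 2 +
      3 * t ^ 2 * x1 * x0 ^ 8 * Dq x0 x1 x2 x3 + t ^ 3 * x0 ^ 13]

/-- The cone map underlying the Cremona transformation `g_t`. -/
def Gmap {k : Type*} [Field k] (t : k) (x : Fin 4 → k) : Fin 4 → k :=
  fT t (x 0) (x 1) (x 2) (x 3)

def shearC {R : Type*} [CommRing R] (s : R) (x : Fin 4 → R) : Fin 4 → R :=
  ![x 0, x 1 + s * x 0, x 2 + 2 * s * x 1 + s ^ 2 * x 0,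
    x 3 + 3 * s * x 2 + 3 * s ^ 2 * x 1 + s ^ 3 * x 0]

lemma shearC_zero {R : Type*} [CommRing R] (s : R) (x : Fin 4 → R) : shearC s x 0 = x 0 := rfl

lemma Dq_shearC {R : Type*} [CommRing R] (s : R) (x : Fin 4 → R) :
    Dq (shearC s x 0) (shearC s x 1) (shearC s x 2) (shearC s x 3) =
      Dq (x 0) (x 1) (x 2) (x 3) := by
  simp only [shearC, Dq, Matrix.cons_val_zero, Matrix.cons_val_one, Matrix.head_cons,
    Matrix.cons_val_two, Matrix.tail_cons, Matrix.cons_val_three]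
  ring

lemma shearC_shearC {R : Type*} [CommRing R] (s : R) (x : Fin 4 → R) :
    shearC (-s) (shearC s x) = x := by
  funext i
  fin_cases i <;> simp [shearC] <;> ring

lemma Dq_smul {R : Type*} [CommRing R] (c x0 x1 x2 x3 : R) :
    Dq (c * x0) (c * x1) (c * x2) (c * x3) = c ^ 4 * Dq x0 x1 x2 x3 := by
  simp only [Dq]; ring

lemma Gmap_smul {k : Type*} [Field k] (t c : k) (x : Fin 4 → k) :
    Gmap t (c • x) = c ^ 13 • Gmap t x := by
  funext i
  fin_cases i <;> simp [Gmap, fT, Dq_smul] <;> ring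

lemma Gmap_eq_shear {k : Type*} [Field k] (t : k) (x : Fin 4 → k)
    (hD : Dq (x 0) (x 1) (x 2) (x 3) ≠ 0) :
    Gmap t x = Dq (x 0) (x 1) (x 2) (x 3) ^ 3 •
      shearC (t * x 0 ^ 4 / Dq (x 0) (x 1) (x 2) (x 3)) x := by
  funext i
  fin_cases i <;>
  (simp [Gmap, fT, shearC]
   try field_simp
   try ring)

lemma Dq_Gmap {k : Type*} [Field k] (t : k) (x : Fin 4 → k)
    (hD : Dq (x 0) (x 1) (x 2) (x 3) ≠ 0) :
    Dq (Gmap t x 0) (Gmap t x 1) (Gmap t x 2) (Gmap t x 3) =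
      Dq (x 0) (x 1) (x 2) (x 3) ^ 13 := by
  rw [Gmap_eq_shear t x hD]
  simp only [Pi.smul_apply, smul_eq_mul]
  rw [Dq_smul, Dq_shearC]
  ring

lemma Gmap_comp {k : Type*} [Field k] (t : k) (x : Fin 4 → k)
    (hD : Dq (x 0) (x 1) (x 2) (x 3) ≠ 0) :
    Gmap (-t) (Gmap t x) = Dq (x 0) (x 1) (x 2) (x 3) ^ 42 • x := by
  set D := Dq (x 0) (x 1) (x 2) (x 3) with hDdef
  set s := t * x 0 ^ 4 / D with hs
  have hDs : Dq (shearC s x 0) (shearC s x 1) (shearC s x 2) (shearC s x 3) = D :=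
    Dq_shearC s x
  have h3 := Gmap_eq_shear (-t) (shearC s x) (by rw [hDs]; exact hD)
  rw [hDs] at h3
  have h4 : -t * shearC s x 0 ^ 4 / D = -s := by
    rw [shearC_zero, hs]; ring
  rw [h4, shearC_shearC] at h3
  rw [Gmap_eq_shear t x hD, Gmap_smul, h3, smul_smul]
  congr 1
  ring

/-- For any field `k` and any `t ∈ k`, the rational map `g_t` restricts to a bijective
(biregular) automorphism of the affine open set `{D ≠ 0} ⊂ P^3`, with inverse `g_{-t}`:
it preserves `{D ≠ 0}`, `g_{-t} ∘ g_t` is the identity up to a nonzero scalar, it is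
surjective and injective up to nonzero scalars (i.e. on projective points). -/
theorem gt_automorphism_of_complement {k : Type*} [Field k] (t : k) :
    (∀ x : Fin 4 → k, Dq (x 0) (x 1) (x 2) (x 3) ≠ 0 →
      Dq (Gmap t x 0) (Gmap t x 1) (Gmap t x 2) (Gmap t x 3) ≠ 0) ∧
    (∀ x : Fin 4 → k, Dq (x 0) (x 1) (x 2) (x 3) ≠ 0 →
      ∃ c : k, c ≠ 0 ∧ Gmap (-t) (Gmap t x) = c • x) ∧
    (∀ y : Fin 4 → k, Dq (y 0) (y 1) (y 2) (y 3) ≠ 0 →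
      ∃ x : Fin 4 → k, Dq (x 0) (x 1) (x 2) (x 3) ≠ 0 ∧
        ∃ c : k, c ≠ 0 ∧ Gmap t x = c • y) ∧
    (∀ x x' : Fin 4 → k, Dq (x 0) (x 1) (x 2) (x 3) ≠ 0 →
      Dq (x' 0) (x' 1) (x' 2) (x' 3) ≠ 0 →
      (∃ c : k, c ≠ 0 ∧ Gmap t x = c • Gmap t x') →
      ∃ c : k, c ≠ 0 ∧ x = c • x') := by
  refine ⟨?_, ?_, ?_, ?_⟩
  · intro x hD
    rw [Dq_Gmap t x hD]
    exact pow_ne_zero _ hD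
  · intro x hD
    exact ⟨_, pow_ne_zero 42 hD, Gmap_comp t x hD⟩
  · intro y hD
    refine ⟨Gmap (-t) y, ?_, Dq (y 0) (y 1) (y 2) (y 3) ^ 42, pow_ne_zero _ hD, ?_⟩
    · rw [Dq_Gmap (-t) y hD]
      exact pow_ne_zero _ hD
    · have := Gmap_comp (-t) y hD
      rwa [neg_neg] at this
  · rintro x x' hx hx' ⟨c, hc, h⟩
    have e : Dq (x 0) (x 1) (x 2) (x 3) ^ 42 • x =
        (c ^ 13 * Dq (x' 0) (x' 1) (x' 2) (x' 3) ^ 42) • x' := by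
      rw [← Gmap_comp t x hx, h, Gmap_smul, Gmap_comp t x' hx', smul_smul]
    have hDx : Dq (x 0) (x 1) (x 2) (x 3) ^ 42 ≠ 0 := pow_ne_zero _ hx
    refine ⟨(Dq (x 0) (x 1) (x 2) (x 3) ^ 42)⁻¹ *
      (c ^ 13 * Dq (x' 0) (x' 1) (x' 2) (x' 3) ^ 42), ?_, ?_⟩
    · exact mul_ne_zero (inv_ne_zero hDx)
        (mul_ne_zero (pow_ne_zero _ hc) (pow_ne_zero _ hx'))
    · rw [← smul_smul, ← e, smul_smul, inv_mul_cancel₀ hDx, one_smul]
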